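/- Let L be a regular language over a finite alphabet Σ and let L_∞ be the set of infinite words over Σ with infinitely many prefixes in L. Then L_∞ is uncountable if and only if every deterministic finite automaton A = (Q, q₀, Σ, δ, F) accepting L contains two distinct cycles based at a common accessible state, each of the two cycles passing through a final state; precisely: there exist an accessible state q and words u, v with δ(q, u) = q, δ(q, v) = q, uv ≠ vu, some prefix u' of u satisfying δ(q, u') ∈ F, and some prefix v' of v satisfying δ(q, v') ∈ F. -/

import Mathlib

/-- The prefix of length `ℓ` of an infinite word `w : ℕ → A`. -/
def prefixOf {A : Type*} (w : ℕ → A) (ℓ : ℕ) : List A := List.ofFn (fun i : Fin ℓ => w i)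

/-- `Linf L` : infinite words having infinitely many finite prefixes in `L`. -/
def Linf {A : Type*} (L : Set (List A)) : Set (ℕ → A) :=
  {w | {n : ℕ | prefixOf w n ∈ L}.Infinite}

/-- Transition function of a deterministic automaton extended to words. -/
def deltaStar {Q A : Type*} (δ : Q → A → Q) (q : Q) (w : List A) : Q := w.foldl δ q

lemma deltaStar_append {Q A : Type*} (δ : Q → A → Q) (q : Q) (x y : List A) :
    deltaStar δ q (x ++ y) = deltaStar δ (deltaStar δ q x) y := List.foldl_append

@[simp] lemma length_prefixOf {A : Type*} (w : ℕ → A) (ℓ : ℕ) :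
    (prefixOf w ℓ).length = ℓ := by simp [prefixOf]

lemma getElem_prefixOf {A : Type*} (w : ℕ → A) (ℓ i : ℕ) (h : i < (prefixOf w ℓ).length) :
    (prefixOf w ℓ)[i] = w i := by simp [prefixOf]

lemma prefixOf_add {A : Type*} (w : ℕ → A) (a b : ℕ) :
    prefixOf w (a + b) = prefixOf w a ++ List.ofFn (fun i : Fin b => w (a + i)) := by
  unfold prefixOf; rw [List.ofFn_add]; rfl

lemma not_countable_funBool : ¬ Countable (ℕ → Bool) := by
  classical
  intro h
  obtain ⟨f, hf⟩ : ∃ f : (ℕ → Bool) → ℕ, Function.Injective f := exists_injective_nat _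
  have : Function.Injective (fun S : Set ℕ => f (fun n => decide (n ∈ S))) := by
    intro S T hST
    have h2 := hf hST
    ext n
    have := congrFun h2 n
    simpa using this
  exact Function.cantor_injective _ this

lemma uncountable_of_loops {Γ : Type*} (L : Set (List Γ)) {Q : Type} (q0 q : Q)
    (δ : Q → Γ → Q) (F : Set Q) (hL : L = {w : List Γ | deltaStar δ q0 w ∈ F})
    (x : List Γ) (hx : deltaStar δ q0 x = q)
    (p p' : List Γ) (hp : deltaStar δ q p = q) (hp' : deltaStar δ q p' = q)
    (hlen : p.length = p'.length) (hne : p ≠ p')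
    (c : List Γ) (hcp : c <+: p) (hcF : deltaStar δ q c ∈ F)
    (c' : List Γ) (hcp' : c' <+: p') (hcF' : deltaStar δ q c' ∈ F) :
    ¬ (Linf L).Countable := by
  classical
  set ℓ := p.length with hℓdef
  have hℓ : 0 < ℓ := by
    rcases Nat.eq_zero_or_pos ℓ with h0 | h
    · exact absurd ((List.length_eq_zero_iff.mp h0).trans
        (List.length_eq_zero_iff.mp (by rw [← hlen]; exact h0)).symm) hne
    · exact h
  set d : Γ := p.get ⟨0, hℓ⟩ with hd
  set block : Bool → List Γ := fun s => cond s p p' with hblock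
  have hblen : ∀ s, (block s).length = ℓ := by
    intro s; cases s
    · exact hlen.symm
    · rfl
  have hbloop : ∀ s, deltaStar δ q (block s) = q := by
    intro s; cases s
    · exact hp'
    · exact hp
  set cho : Bool → List Γ := fun s => cond s c c' with hcho
  have hchopre : ∀ s, cho s <+: block s := by
    intro s; cases s
    · exact hcp'
    · exact hcp
  have hchoF : ∀ s, deltaStar δ q (cho s) ∈ F := by
    intro s; cases s
    · exact hcF'
    · exact hcF
  have hcholen : ∀ s, (cho s).length ≤ ℓ := by
    intro s; have := (hchopre s).length_le; rwa [hblen s] at this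
  have e1 : ∀ j i, i < ℓ → (j * ℓ + i) / ℓ = j := by
    intro j i hi
    rw [add_comm, Nat.add_mul_div_right _ _ hℓ, Nat.div_eq_of_lt hi, Nat.zero_add]
  have e2 : ∀ j i, i < ℓ → (j * ℓ + i) % ℓ = i := by
    intro j i hi
    rw [add_comm, Nat.add_mul_mod_self_right, Nat.mod_eq_of_lt hi]
  set tl : (ℕ → Bool) → ℕ → Γ := fun b n => (block (b (n / ℓ))).getD (n % ℓ) d with htl
  set W : (ℕ → Bool) → ℕ → Γ :=
    fun b n => if n < x.length then x.getD n d else tl b (n - x.length) with hW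
  have htleval : ∀ b j i, i < ℓ → tl b (j * ℓ + i) = (block (b j)).getD i d := by
    intro b j i hi
    show (block (b ((j * ℓ + i) / ℓ))).getD ((j * ℓ + i) % ℓ) d = _
    rw [e1 j i hi, e2 j i hi]
  have hWeval : ∀ b j i, i < ℓ → W b (x.length + (j * ℓ + i)) = (block (b j)).getD i d := by
    intro b j i hi
    show (if x.length + (j * ℓ + i) < x.length then x.getD _ d
      else tl b (x.length + (j * ℓ + i) - x.length)) = _
    rw [if_neg (by omega), Nat.add_sub_cancel_left, htleval b j i hi]
  have hWpre : ∀ b m, prefixOf (W b) (x.length + m) = x ++ prefixOf (tl b) m := by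
    intro b m
    rw [prefixOf_add]
    congr 1
    · apply List.ext_getElem (by simp)
      intro n h1 h2
      rw [getElem_prefixOf]
      show (if (n : ℕ) < x.length then x.getD n d else tl b (n - x.length)) = x[n]
      rw [if_pos (by omega), List.getD_eq_getElem]
    · apply List.ext_getElem (by simp [prefixOf])
      intro n h1 h2
      simp only [prefixOf, List.getElem_ofFn]
      show (if x.length + n < x.length then x.getD _ d else tl b (x.length + n - x.length)) = _
      rw [if_neg (by omega), Nat.add_sub_cancel_left]
  have hseg : ∀ b j, List.ofFn (fun i : Fin ℓ => tl b (j * ℓ + i)) = block (b j) := by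
    intro b j
    apply List.ext_getElem (by simp [hblen])
    intro n h1 h2
    simp only [List.getElem_ofFn]
    have hn : n < ℓ := by simpa using h1
    rw [htleval b j n hn, List.getD_eq_getElem _ _ (by rw [hblen]; exact hn)]
  have hsegc : ∀ b j,
      List.ofFn (fun i : Fin (cho (b j)).length => tl b (j * ℓ + i)) = cho (b j) := by
    intro b j
    apply List.ext_getElem (by simp)
    intro n h1 h2
    simp only [List.getElem_ofFn]
    have hn : n < (cho (b j)).length := by simpa using h1
    have hn' : n < ℓ := lt_of_lt_of_le hn (hcholen _)
    rw [htleval b j n hn', List.getD_eq_getElem _ _ (by rw [hblen]; exact hn')]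
    exact ((hchopre (b j)).getElem hn).symm
  have hstate : ∀ b j, deltaStar δ q (prefixOf (tl b) (j * ℓ)) = q := by
    intro b j
    induction j with
    | zero => simp [prefixOf, deltaStar]
    | succ j ih =>
      have hj : (j + 1) * ℓ = j * ℓ + ℓ := by ring
      rw [hj, prefixOf_add, deltaStar_append, ih, hseg, hbloop]
  have hmem : ∀ b j, prefixOf (W b) (x.length + (j * ℓ + (cho (b j)).length)) ∈ L := by
    intro b j
    rw [hWpre, prefixOf_add, hsegc, hL]
    show deltaStar δ q0 _ ∈ F
    rw [deltaStar_append, deltaStar_append, hx, hstate]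
    exact hchoF _
  have hWL : ∀ b, W b ∈ Linf L := by
    intro b
    apply Set.infinite_of_not_bddAbove
    rintro ⟨ub, hub⟩
    have h1 := hub (Set.mem_setOf.mpr (hmem b (ub + 1)))
    have h2 : (ub + 1) * ℓ ≤ ub := by omega
    nlinarith [hℓ]
  have hinj : Function.Injective W := by
    intro b b' hbb
    funext j
    by_contra hj
    have hblockne : block (b j) ≠ block (b' j) := by
      cases hb : b j <;> cases hb' : b' j
      · exact absurd (hb.trans hb'.symm) hj
      · exact fun h => hne h.symm
      · exact hne
      · exact absurd (hb.trans hb'.symm) hj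
    obtain ⟨i, hi, hine⟩ : ∃ i, ∃ h : i < ℓ, (block (b j))[i]'(by rw [hblen]; exact h)
        ≠ (block (b' j))[i]'(by rw [hblen]; exact h) := by
      by_contra hcon
      push_neg at hcon
      exact hblockne (List.ext_getElem (by rw [hblen, hblen]) (fun n h1 h2 =>
        hcon n (by rwa [hblen] at h1)))
    have t1 := hWeval b j i hi
    have t2 := hWeval b' j i hi
    rw [hbb] at t1
    rw [t2, List.getD_eq_getElem _ _ (by rw [hblen]; exact hi),
      List.getD_eq_getElem _ _ (by rw [hblen]; exact hi)] at t1
    exact hine t1.symm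
  intro hc
  have hcsub : Countable ↥(Linf L) := hc.to_subtype
  have : Countable (ℕ → Bool) :=
    Function.Injective.countable (f := fun b => (⟨W b, hWL b⟩ : ↥(Linf L)))
      (fun a a' h => hinj (congrArg Subtype.val h))
  exact not_countable_funBool this

/-- segment of an infinite word -/
def seg {A : Type*} (w : ℕ → A) (a b : ℕ) : List A := List.ofFn (fun i : Fin (b - a) => w (a + i))

lemma prefixOf_eq_append_seg {A : Type*} (w : ℕ → A) {a b : ℕ} (h : a ≤ b) :
    prefixOf w b = prefixOf w a ++ seg w a b := by
  rw [seg, ← prefixOf_add, Nat.add_sub_cancel' h]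

lemma countable_of_no_loops {Γ : Type*} [Countable Γ] (L : Set (List Γ)) {Q : Type}
    [Fintype Q] (q0 : Q) (δ : Q → Γ → Q) (F : Set Q)
    (hL : L = {w : List Γ | deltaStar δ q0 w ∈ F})
    (H : ¬ ∃ q : Q,
          (∃ x : List Γ, deltaStar δ q0 x = q) ∧
          ∃ u v : List Γ, deltaStar δ q u = q ∧ deltaStar δ q v = q ∧ u ++ v ≠ v ++ u ∧
            (∃ u' : List Γ, u' <+: u ∧ deltaStar δ q u' ∈ F) ∧
            (∃ v' : List Γ, v' <+: v ∧ deltaStar δ q v' ∈ F)) :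
    (Linf L).Countable := by
  classical
  -- the countable family of eventually periodic words
  set g : List Γ × {t : List Γ // t ≠ []} → (ℕ → Γ) :=
    fun z n => if h : n < z.1.length then z.1.get ⟨n, h⟩
      else z.2.1.get ⟨(n - z.1.length) % z.2.1.length,
        Nat.mod_lt _ (List.length_pos_iff.mpr z.2.2)⟩ with hg
  apply Set.Countable.mono _ (Set.countable_range g)
  intro w hw
  have hN : {n : ℕ | deltaStar δ q0 (prefixOf w n) ∈ F}.Infinite := by
    have := hw
    rw [Linf, Set.mem_setOf_eq, hL] at this
    simpa using this
  haveI : Infinite ↥{n : ℕ | deltaStar δ q0 (prefixOf w n) ∈ F} := hN.to_subtype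
  obtain ⟨f, hf⟩ := Finite.exists_infinite_fiber
    (fun n : ↥{n : ℕ | deltaStar δ q0 (prefixOf w n) ∈ F} => deltaStar δ q0 (prefixOf w n))
  set M := {n : ℕ | deltaStar δ q0 (prefixOf w n) = f ∧ deltaStar δ q0 (prefixOf w n) ∈ F} with hMdef
  have hM : M.Infinite := by
    haveI := hf
    apply Set.infinite_of_injective_forall_mem
      (f := fun z : ↥((fun n : ↥{n : ℕ | deltaStar δ q0 (prefixOf w n) ∈ F} =>
        deltaStar δ q0 (prefixOf w n)) ⁻¹' {f}) => (z.1.1 : ℕ))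
    · intro a b hab
      exact Subtype.ext (Subtype.ext hab)
    · rintro ⟨⟨n, hn⟩, hn2⟩
      exact ⟨hn2, hn⟩
  obtain ⟨n₀, hn₀⟩ : ∃ n, n ∈ M := hM.nonempty
  have hfF : f ∈ F := by rw [← hn₀.1]; exact hn₀.2
  -- commuting property at f
  have hcomm : ∀ u v : List Γ, deltaStar δ f u = f → deltaStar δ f v = f → u ++ v = v ++ u := by
    intro u v hu hv
    by_contra hne
    exact H ⟨f, ⟨prefixOf w n₀, hn₀.1⟩, u, v, hu, hv, hne,
      ⟨[], List.nil_prefix, (by simpa [deltaStar] using hfF)⟩,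
      ⟨[], List.nil_prefix, (by simpa [deltaStar] using hfF)⟩⟩
  obtain ⟨n₁, hn₁M, hn₁⟩ := hM.exists_gt n₀
  set t : List Γ := seg w n₀ n₁ with ht
  have htlen : t.length = n₁ - n₀ := by simp [ht, seg]
  have htpos : 0 < t.length := by omega
  have htne : t ≠ [] := by rw [← List.length_pos_iff]; exact htpos
  -- segments from n₀ to m ∈ M are loops at f
  have hloop : ∀ m, m ∈ M → n₀ ≤ m → deltaStar δ f (seg w n₀ m) = f := by
    intro m hm h0m
    have hdec := prefixOf_eq_append_seg w h0m
    have : deltaStar δ q0 (prefixOf w m) = f := hm.1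
    rw [hdec, deltaStar_append, hn₀.1] at this
    exact this
  have hsegget : ∀ a b i, ∀ h : i < (seg w a b).length, (seg w a b)[i] = w (a + i) := by
    intro a b i h
    simp [seg]
  have htget : ∀ i, ∀ h : i < t.length, t[i] = w (n₀ + i) := fun i h => hsegget n₀ n₁ i h
  -- periodicity
  have hper : ∀ k, t.length ≤ k → w (n₀ + k) = w (n₀ + (k - t.length)) := by
    intro k hk
    obtain ⟨m, hmM, hmgt⟩ := hM.exists_gt (n₀ + k)
    have hulen : (seg w n₀ m).length = m - n₀ := by simp [seg]
    have hcm : t ++ seg w n₀ m = seg w n₀ m ++ t :=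
      hcomm t _ (hloop n₁ hn₁M (le_of_lt hn₁)) (hloop m hmM (by omega))
    have hklt : k < (seg w n₀ m).length := by omega
    have hlen2 : k < (t ++ seg w n₀ m).length := by rw [List.length_append]; omega
    have h1 := List.getElem_of_eq hcm hlen2
    rw [List.getElem_append_right (by omega), List.getElem_append_left hklt,
      hsegget, hsegget] at h1
    exact h1.symm
  -- full periodicity
  have hper2 : ∀ k, w (n₀ + k) = t[k % t.length]'(Nat.mod_lt _ htpos) := by
    intro k
    induction k using Nat.strong_induction_on with
    | _ k ih =>
      rcases lt_or_ge k t.length with hlt | hge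
      · rw [htget (k % t.length) (Nat.mod_lt _ htpos)]
        congr 1
        rw [Nat.mod_eq_of_lt hlt]
      · have h1 := hper k hge
        have h2 := ih (k - t.length) (by omega)
        rw [h1, h2, htget _ (Nat.mod_lt _ htpos), htget _ (Nat.mod_lt _ htpos)]
        congr 2
        rw [Nat.mod_eq_sub_mod hge]
  -- conclude
  refine ⟨(prefixOf w n₀, ⟨t, htne⟩), ?_⟩
  funext n
  rw [hg]
  simp only []
  split_ifs with h
  · rw [List.get_eq_getElem, getElem_prefixOf]
  · simp only [length_prefixOf] at h ⊢
    have hn : n = n₀ + (n - n₀) := by omega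
    rw [List.get_eq_getElem]
    conv_rhs => rw [hn]
    exact (hper2 (n - n₀)).symm


theorem stmt_4 {Γ : Type*} [Fintype Γ] (L : Set (List Γ))
    (hreg : ∃ (n : ℕ) (q0 : Fin n) (δ : Fin n → Γ → Fin n) (F : Set (Fin n)),
      L = {w | deltaStar δ q0 w ∈ F}) :
    ¬ (Linf L).Countable ↔
      ∀ (Q : Type) [Fintype Q], ∀ (q0 : Q) (δ : Q → Γ → Q) (F : Set Q),
        L = {w | deltaStar δ q0 w ∈ F} →
        ∃ q : Q,
          (∃ x : List Γ, deltaStar δ q0 x = q) ∧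
          ∃ u v : List Γ, deltaStar δ q u = q ∧ deltaStar δ q v = q ∧ u ++ v ≠ v ++ u ∧
            (∃ u' : List Γ, u' <+: u ∧ deltaStar δ q u' ∈ F) ∧
            (∃ v' : List Γ, v' <+: v ∧ deltaStar δ q v' ∈ F) := by
  constructor
  · intro hunc Q _ q0 δ F hLQ
    by_contra H
    exact hunc (countable_of_no_loops L q0 δ F hLQ H)
  · intro h
    obtain ⟨n, q0, δ, F, hL⟩ := hreg
    obtain ⟨q, ⟨x, hx⟩, u, v, hu, hv, hcm, ⟨u', hu'p, hu'F⟩, ⟨v', hv'p, hv'F⟩⟩ :=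
      h (Fin n) q0 δ F hL
    exact uncountable_of_loops L q0 q δ F hL x hx (u ++ v) (v ++ u)
      (by rw [deltaStar_append, hu, hv]) (by rw [deltaStar_append, hv, hu])
      (by simp [Nat.add_comm]) hcm
      u' (hu'p.trans (List.prefix_append u v)) hu'F
      v' (hv'p.trans (List.prefix_append v u)) hv'F
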